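/- arXiv:1409.3649 — 4 statements merged into one kernel-verified Lean document; each statement's English description precedes it below -/
import Mathlib

section
/- Let (X, 𝓕, m) be a probability space, T an m-nonsingular transformation whose Perron–Frobenius operator 𝓛_T is asymptotically periodic with data s, r(i), g_{i,j}, λ_{i,j}; set g_i = (1/r(i)) Σ_{j=1}^{r(i)} g_{i,j}. Then for each i ∈ {1,…,s}, the probability measure μ_i defined by dμ_i = g_i dm is T-invariant (T is measure-preserving on (X, μ_i)) and T is ergodic with respect to μ_i. -/
open MeasureTheory Filter Topology

noncomputable section

/-- `L` is the Perron–Frobenius operator of the `μ`-nonsingular transformation `T`: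
for every integrable `f`, `L f` is integrable and `∫_A L f dμ = ∫_{T⁻¹ A} f dμ`
for every measurable set `A`. -/
def IsPF {α : Type*} [MeasurableSpace α] (μ : Measure α) (T : α → α)
    (L : (α → ℝ) → α → ℝ) : Prop :=
  ∀ f : α → ℝ, Integrable f μ →
    Integrable (L f) μ ∧
      ∀ A : Set α, MeasurableSet A → ∫ x in A, L f x ∂μ = ∫ x in T ⁻¹' A, f x ∂μ

set_option linter.unusedSectionVars false

section Helpers
variable {X : Type*} [MeasurableSpace X] {m : Measure X} [IsProbabilityMeasure m]
  {T : X → X} {L : (X → ℝ) → X → ℝ}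

/-- a.e. uniqueness from set integrals. -/
lemma pf_ae_eq_of_sets {u v : X → ℝ} (hu : Integrable u m) (hv : Integrable v m)
    (h : ∀ B : Set X, MeasurableSet B → ∫ x in B, u x ∂m = ∫ x in B, v x ∂m) :
    u =ᵐ[m] v :=
  Integrable.ae_eq_of_forall_setIntegral_eq u v hu hv (fun B hB _ => h B hB)

lemma pf_congr (hL : IsPF m T L) {u v : X → ℝ} (hu : Integrable u m) (hv : Integrable v m)
    (h : u =ᵐ[m] v) : L u =ᵐ[m] L v := by
  refine pf_ae_eq_of_sets (hL u hu).1 (hL v hv).1 (fun B hB => ?_)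
  rw [(hL u hu).2 B hB, (hL v hv).2 B hB]
  exact integral_congr_ae (ae_restrict_of_ae h)

lemma pf_sub (hL : IsPF m T L) {u v : X → ℝ} (hu : Integrable u m) (hv : Integrable v m) :
    L (fun x => u x - v x) =ᵐ[m] fun x => L u x - L v x := by
  have h1 := hL (fun x => u x - v x) (hu.sub hv)
  refine pf_ae_eq_of_sets h1.1 (((hL u hu).1).sub (hL v hv).1) (fun B hB => ?_)
  rw [h1.2 B hB]
  rw [integral_sub (hu.integrableOn) (hv.integrableOn),
    integral_sub ((hL u hu).1.integrableOn) ((hL v hv).1.integrableOn),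
    (hL u hu).2 B hB, (hL v hv).2 B hB]

lemma pf_finsum (hL : IsPF m T L) {ι : Type*} (F : Finset ι) (u : ι → X → ℝ)
    (hu : ∀ p ∈ F, Integrable (u p) m) :
    L (fun x => ∑ p ∈ F, u p x) =ᵐ[m] fun x => ∑ p ∈ F, L (u p) x := by
  have hsum : Integrable (fun x => ∑ p ∈ F, u p x) m := integrable_finset_sum F hu
  refine pf_ae_eq_of_sets (hL _ hsum).1
    (integrable_finset_sum F (fun p hp => (hL _ (hu p hp)).1)) (fun B hB => ?_)
  rw [(hL _ hsum).2 B hB,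
    integral_finset_sum F (fun p hp => (hu p hp).integrableOn),
    integral_finset_sum F (fun p hp => ((hL _ (hu p hp)).1).integrableOn)]
  exact Finset.sum_congr rfl (fun p hp => ((hL _ (hu p hp)).2 B hB).symm)

lemma pf_const_mul (hL : IsPF m T L) {u : X → ℝ} (hu : Integrable u m) (c : ℝ) :
    L (fun x => c * u x) =ᵐ[m] fun x => c * L u x := by
  have h1 := hL (fun x => c * u x) (hu.const_mul c)
  refine pf_ae_eq_of_sets h1.1 ((hL u hu).1.const_mul c) (fun B hB => ?_)
  rw [h1.2 B hB, MeasureTheory.integral_const_mul, MeasureTheory.integral_const_mul,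
    (hL u hu).2 B hB]

lemma pf_iter_integrable (hL : IsPF m T L) {u : X → ℝ} (hu : Integrable u m) (n : ℕ) :
    Integrable (L^[n] u) m := by
  induction n with
  | zero => exact hu
  | succ n ih => rw [Function.iterate_succ_apply']; exact (hL _ ih).1

/-- push a.e. equalities through finite sums -/
lemma sum_ae {ι : Type*} (F : Finset ι) (u v : ι → X → ℝ)
    (h : ∀ p ∈ F, u p =ᵐ[m] v p) :
    (fun x => ∑ p ∈ F, u p x) =ᵐ[m] fun x => ∑ p ∈ F, v p x := by
  have := (Filter.eventually_all_finset F).2 h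
  filter_upwards [this] with x hx
  exact Finset.sum_congr rfl hx

end Helpers

/-- predecessor in the cycle `1, 2, …, R`. -/
def prvIdx (R l : ℕ) : ℕ := if l = 1 then R else l - 1

lemma cycle_reindex {M : Type*} [AddCommMonoid M] {R : ℕ} (hR : 1 ≤ R)
    (F : ℕ → ℕ → M) :
    ∑ l ∈ Finset.Icc 1 R, F l (l % R + 1) = ∑ l ∈ Finset.Icc 1 R, F (prvIdx R l) l := by
  refine Finset.sum_nbij' (fun l => l % R + 1) (fun l => prvIdx R l) ?_ ?_ ?_ ?_ ?_
  · intro a ha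
    simp only [Finset.mem_Icc] at ha ⊢
    have := Nat.mod_lt a (show 0 < R by omega)
    omega
  · intro b hb
    simp only [Finset.mem_Icc] at hb ⊢
    unfold prvIdx
    split <;> omega
  · intro a ha
    simp only [Finset.mem_Icc] at ha
    rcases eq_or_lt_of_le ha.2 with h | h
    · subst h
      rw [Nat.mod_self]
      unfold prvIdx
      simp
    · rw [Nat.mod_eq_of_lt h]
      unfold prvIdx
      split <;> omega
  · intro b hb
    simp only [Finset.mem_Icc] at hb
    unfold prvIdx
    split
    · rename_i hb1
      subst hb1
      rw [Nat.mod_self]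
    · rw [Nat.mod_eq_of_lt (by omega)]
      omega
  · intro a ha
    simp only [Finset.mem_Icc] at ha
    congr 1
    rcases eq_or_lt_of_le ha.2 with h | h
    · subst h
      rw [Nat.mod_self]
      unfold prvIdx
      simp
    · rw [Nat.mod_eq_of_lt h]
      unfold prvIdx
      split <;> omega

/-- the `n`-step evolution of the asymptotic part `∑ c k l • g k l`. -/
def Hfun {X : Type*} (c : ℕ → ℕ → ℝ) (r : ℕ → ℕ) (g : ℕ → ℕ → X → ℝ) (s n : ℕ) : X → ℝ :=
  fun x => ∑ k ∈ Finset.Icc 1 s, ∑ l ∈ Finset.Icc 1 (r k), c k l * g k ((l - 1 + n) % r k + 1) x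

lemma tau_mem {R l : ℕ} (n : ℕ) (h1 : 1 ≤ l) (h2 : l ≤ R) :
    (l - 1 + n) % R + 1 ∈ Finset.Icc 1 R := by
  rw [Finset.mem_Icc]
  have := Nat.mod_lt (l - 1 + n) (show 0 < R by omega)
  omega

lemma Hfun_zero {X : Type*} (c : ℕ → ℕ → ℝ) (r : ℕ → ℕ) (g : ℕ → ℕ → X → ℝ) (s : ℕ) :
    Hfun c r g s 0 = fun x => ∑ k ∈ Finset.Icc 1 s, ∑ l ∈ Finset.Icc 1 (r k),
      c k l * g k l x := by
  funext x
  refine Finset.sum_congr rfl (fun k hk => Finset.sum_congr rfl (fun l hl => ?_))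
  rw [Finset.mem_Icc] at hl
  rw [Nat.add_zero, Nat.mod_eq_of_lt (by omega)]
  congr 2
  omega

lemma Hfun_one {X : Type*} (c : ℕ → ℕ → ℝ) (r : ℕ → ℕ) (g : ℕ → ℕ → X → ℝ) (s : ℕ)
    (hr : ∀ k ∈ Finset.Icc 1 s, 1 ≤ r k) :
    Hfun c r g s 1 = fun x => ∑ k ∈ Finset.Icc 1 s, ∑ l ∈ Finset.Icc 1 (r k),
      c k (prvIdx (r k) l) * g k l x := by
  funext x
  refine Finset.sum_congr rfl (fun k hk => ?_)
  have h1 : ∀ l ∈ Finset.Icc 1 (r k), c k l * g k ((l - 1 + 1) % r k + 1) x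
      = c k l * g k (l % r k + 1) x := by
    intro l hl
    rw [Finset.mem_Icc] at hl
    have h2 : l - 1 + 1 = l := by omega
    rw [h2]
  rw [Finset.sum_congr rfl h1]
  exact cycle_reindex (hr k hk) (fun l t => c k l * g k t x)

section MainHelpers
variable {X : Type*} [MeasurableSpace X] {m : Measure X} [IsProbabilityMeasure m]
  {T : X → X} {L : (X → ℝ) → X → ℝ} {s : ℕ} {r : ℕ → ℕ} {g : ℕ → ℕ → X → ℝ}

lemma Hfun_int (hgint : ∀ k ∈ Finset.Icc 1 s, ∀ l ∈ Finset.Icc 1 (r k), Integrable (g k l) m)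
    (c : ℕ → ℕ → ℝ) (n : ℕ) : Integrable (Hfun c r g s n) m := by
  refine integrable_finset_sum _ (fun k hk => ?_)
  refine integrable_finset_sum _ (fun l hl => ?_)
  rw [Finset.mem_Icc] at hl
  exact (hgint k hk _ (tau_mem n hl.1 hl.2)).const_mul _

lemma Hfun_step (hL : IsPF m T L)
    (hgint : ∀ k ∈ Finset.Icc 1 s, ∀ l ∈ Finset.Icc 1 (r k), Integrable (g k l) m)
    (hshift : ∀ k ∈ Finset.Icc 1 s, ∀ l ∈ Finset.Icc 1 (r k),
      L (g k l) =ᵐ[m] g k (l % r k + 1))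
    (c : ℕ → ℕ → ℝ) (n : ℕ) :
    L (Hfun c r g s n) =ᵐ[m] Hfun c r g s (n + 1) := by
  classical
  set F : Finset ((_ : ℕ) × ℕ) := (Finset.Icc 1 s).sigma (fun k => Finset.Icc 1 (r k)) with hF
  have hmemF : ∀ p : Σ _ : ℕ, ℕ, p ∈ F → p.1 ∈ Finset.Icc 1 s ∧ p.2 ∈ Finset.Icc 1 (r p.1) := by
    intro p hp; rwa [hF, Finset.mem_sigma] at hp
  have hmem2 : ∀ p ∈ F, (p.2 - 1 + n) % r p.1 + 1 ∈ Finset.Icc 1 (r p.1) := by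
    intro p hp
    obtain ⟨h1, h2⟩ := hmemF p hp
    rw [Finset.mem_Icc] at h2
    exact tau_mem n h2.1 h2.2
  have hform : ∀ n', Hfun c r g s n' =
      fun x => ∑ p ∈ F, c p.1 p.2 * g p.1 ((p.2 - 1 + n') % r p.1 + 1) x := by
    intro n'; funext x
    exact (Finset.sum_sigma _ _ (fun p : Σ _ : ℕ, ℕ => c p.1 p.2 * g p.1 ((p.2 - 1 + n') % r p.1 + 1) x)).symm
  have e1 : L (Hfun c r g s n) =ᵐ[m]
      fun x => ∑ p ∈ F, L (fun y => c p.1 p.2 * g p.1 ((p.2 - 1 + n) % r p.1 + 1) y) x := by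
    rw [hform n]
    exact pf_finsum hL F _
      (fun p hp => ((hgint p.1 (hmemF p hp).1 _ (hmem2 p hp)).const_mul _))
  have e2 : (fun x => ∑ p ∈ F, L (fun y => c p.1 p.2 * g p.1 ((p.2 - 1 + n) % r p.1 + 1) y) x)
      =ᵐ[m] fun x => ∑ p ∈ F, c p.1 p.2 * L (g p.1 ((p.2 - 1 + n) % r p.1 + 1)) x :=
    sum_ae F _ _
      (fun p hp => pf_const_mul hL (hgint p.1 (hmemF p hp).1 _ (hmem2 p hp)) _)
  have e3 : (fun x => ∑ p ∈ F, c p.1 p.2 * L (g p.1 ((p.2 - 1 + n) % r p.1 + 1)) x)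
      =ᵐ[m] fun x => ∑ p ∈ F, c p.1 p.2 *
        g p.1 (((p.2 - 1 + n) % r p.1 + 1) % r p.1 + 1) x :=
    sum_ae F _ _ (fun p hp =>
      (hshift p.1 (hmemF p hp).1 _ (hmem2 p hp)).mono (fun x hx => by
        simp only []
        rw [hx]))
  have e4 : (fun x => ∑ p ∈ F, c p.1 p.2 *
        g p.1 (((p.2 - 1 + n) % r p.1 + 1) % r p.1 + 1) x) = Hfun c r g s (n + 1) := by
    rw [hform (n + 1)]
    funext x
    refine Finset.sum_congr rfl (fun p _ => ?_)
    congr 2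
    rw [Nat.mod_add_mod, Nat.add_assoc]
  have := (e1.trans e2).trans e3
  rwa [e4] at this

lemma key_iter (hL : IsPF m T L)
    (hgint : ∀ k ∈ Finset.Icc 1 s, ∀ l ∈ Finset.Icc 1 (r k), Integrable (g k l) m)
    (hshift : ∀ k ∈ Finset.Icc 1 s, ∀ l ∈ Finset.Icc 1 (r k),
      L (g k l) =ᵐ[m] g k (l % r k + 1))
    {f : X → ℝ} (hfint : Integrable f m) (hfL : L f =ᵐ[m] f) (c : ℕ → ℕ → ℝ) (n : ℕ) :
    L^[n] (fun x => f x - Hfun c r g s 0 x) =ᵐ[m] fun x => f x - Hfun c r g s n x := by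
  induction n with
  | zero => exact EventuallyEq.rfl
  | succ n ih =>
    rw [Function.iterate_succ_apply']
    have h1 : L (L^[n] fun x => f x - Hfun c r g s 0 x)
        =ᵐ[m] L (fun x => f x - Hfun c r g s n x) :=
      pf_congr hL (pf_iter_integrable hL (hfint.sub (Hfun_int hgint c 0)) n)
        (hfint.sub (Hfun_int hgint c n)) ih
    have h2 := pf_sub hL hfint (Hfun_int hgint c n)
    have h3 : (fun x => L f x - L (Hfun c r g s n) x)
        =ᵐ[m] fun x => f x - Hfun c r g s (n + 1) x := by
      filter_upwards [hfL, Hfun_step hL hgint hshift c n] with x hx1 hx2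
      rw [hx1, hx2]
    exact (h1.trans h2).trans h3

lemma Hfun_period (hdvd : ∀ k ∈ Finset.Icc 1 s, r k ∣ N) (c : ℕ → ℕ → ℝ) (t n₀ : ℕ) :
    Hfun c r g s (t * N + n₀) = Hfun c r g s n₀ := by
  funext x
  refine Finset.sum_congr rfl (fun k hk => Finset.sum_congr rfl (fun l _ => ?_))
  obtain ⟨q, hq⟩ := hdvd k hk
  congr 2
  rw [hq]
  have h1 : l - 1 + (t * (r k * q) + n₀) = (l - 1 + n₀) + t * q * r k := by ring
  rw [h1, Nat.add_mul_mod_self_right]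

end MainHelpers

/-- Asymptotic periodicity of an operator `L` on `L¹(μ)` with data `s`, `r i`,
probability densities `g i j` and bounded linear functionals `Λ i j`. -/
def AsympPeriodic {α : Type*} [MeasurableSpace α] (μ : Measure α)
    (L : (α → ℝ) → α → ℝ) (s : ℕ) (r : ℕ → ℕ) (g : ℕ → ℕ → α → ℝ)
    (Λ : ℕ → ℕ → (α →₁[μ] ℝ) →L[ℝ] ℝ) : Prop :=
  1 ≤ s ∧ (∀ i ∈ Finset.Icc 1 s, 1 ≤ r i) ∧
    (∀ i ∈ Finset.Icc 1 s, ∀ j ∈ Finset.Icc 1 (r i),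
      Measurable (g i j) ∧ Integrable (g i j) μ ∧ 0 ≤ᵐ[μ] g i j ∧ ∫ x, g i j x ∂μ = 1) ∧
    (∀ i ∈ Finset.Icc 1 s, ∀ j ∈ Finset.Icc 1 (r i), ∀ k ∈ Finset.Icc 1 s,
      ∀ l ∈ Finset.Icc 1 (r k), (i, j) ≠ (k, l) →
        (fun x => g i j x * g k l x) =ᵐ[μ] 0) ∧
    (∀ i ∈ Finset.Icc 1 s,
      (∀ j ∈ Finset.Icc 1 (r i - 1), L (g i j) =ᵐ[μ] g i (j + 1)) ∧
        L (g i (r i)) =ᵐ[μ] g i 1) ∧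
    ∀ (f : α → ℝ) (hf : Integrable f μ),
      Tendsto (fun n => ∫ x, |(L^[n] (fun x => f x -
          ∑ i ∈ Finset.Icc 1 s, ∑ j ∈ Finset.Icc 1 (r i), Λ i j (hf.toL1 f) * g i j x)) x| ∂μ)
        atTop (𝓝 0)

/-- The averaged density `(1/r) ∑_{j=1}^{r} g j`. -/
def avgDens {α : Type*} (r : ℕ) (g : ℕ → α → ℝ) : α → ℝ :=
  fun x => (r : ℝ)⁻¹ * ∑ j ∈ Finset.Icc 1 r, g j x

/-- **Proposition 2.6(a).** If `𝓛_T` is asymptotically periodic with data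
`s, r, g, Λ` and `g_i = (1/r i) ∑_j g_{i,j}`, then for each `i` the probability
measure `μ_i = g_i·dm` is `T`-invariant and `T` is ergodic with respect to it. -/
theorem stmt_8 {X : Type*} [MeasurableSpace X] (m : Measure X) [IsProbabilityMeasure m]
    (T : X → X) (hT : Measurable T)
    (hns : ∀ A : Set X, MeasurableSet A → m A = 0 → m (T ⁻¹' A) = 0)
    (L : (X → ℝ) → X → ℝ) (hL : IsPF m T L)
    (s : ℕ) (r : ℕ → ℕ) (g : ℕ → ℕ → X → ℝ) (Λ : ℕ → ℕ → (X →₁[m] ℝ) →L[ℝ] ℝ)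
    (hap : AsympPeriodic m L s r g Λ) :
    ∀ i ∈ Finset.Icc 1 s,
      IsProbabilityMeasure
          (m.withDensity fun x => ENNReal.ofReal (avgDens (r i) (g i) x)) ∧
        Ergodic T (m.withDensity fun x => ENNReal.ofReal (avgDens (r i) (g i) x)) := by

  classical
  obtain ⟨hs1, hr, hg, hdis, hcyc, htend⟩ := hap
  intro i hi
  have hR : 1 ≤ r i := hr i hi
  set gi : X → ℝ := avgDens (r i) (g i) with hgi_def
  have hRne : (r i : ℝ) ≠ 0 := Nat.cast_ne_zero.2 (by omega)
  -- accessors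
  have hgint : ∀ k ∈ Finset.Icc 1 s, ∀ l ∈ Finset.Icc 1 (r k), Integrable (g k l) m :=
    fun k hk l hl => (hg k hk l hl).2.1
  -- basic properties of gi
  have hgiint : Integrable gi m := by
    rw [hgi_def]
    show Integrable (fun x => ((r i : ℝ))⁻¹ * ∑ j ∈ Finset.Icc 1 (r i), g i j x) m
    exact (integrable_finset_sum _ (fun j hj => hgint i hi j hj)).const_mul _
  have hginn : 0 ≤ᵐ[m] gi := by
    have hall : ∀ᵐ x ∂m, ∀ j ∈ Finset.Icc 1 (r i), 0 ≤ g i j x :=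
      (Filter.eventually_all_finset _).2
        (fun j hj => ((hg i hi j hj).2.2.1).mono (fun x hx => by simpa using hx))
    filter_upwards [hall] with x hx
    show (0 : ℝ) ≤ gi x
    have h1 : 0 ≤ ∑ j ∈ Finset.Icc 1 (r i), g i j x := Finset.sum_nonneg hx
    have h0 : (0 : ℝ) ≤ ((r i : ℝ))⁻¹ := by positivity
    exact mul_nonneg h0 h1
  have hgi1 : ∫ x, gi x ∂m = 1 := by
    have h1 : ∫ x, gi x ∂m
        = ((r i : ℝ))⁻¹ * ∑ j ∈ Finset.Icc 1 (r i), ∫ x, g i j x ∂m := by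
      rw [hgi_def]
      show (∫ x, ((r i : ℝ))⁻¹ * ∑ j ∈ Finset.Icc 1 (r i), g i j x ∂m) = _
      rw [MeasureTheory.integral_const_mul,
        integral_finset_sum _ (fun j hj => hgint i hi j hj)]
    rw [h1, Finset.sum_congr rfl (fun j hj => (hg i hi j hj).2.2.2), Finset.sum_const,
      Nat.card_Icc, Nat.add_sub_cancel, nsmul_eq_mul, mul_one]
    exact inv_mul_cancel₀ hRne
  -- shift of densities
  have hshift : ∀ k ∈ Finset.Icc 1 s, ∀ l ∈ Finset.Icc 1 (r k),
      L (g k l) =ᵐ[m] g k (l % r k + 1) := by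
    intro k hk l hl
    rw [Finset.mem_Icc] at hl
    rcases eq_or_lt_of_le hl.2 with hlr | hlr
    · subst hlr
      rw [Nat.mod_self]
      simpa using (hcyc k hk).2
    · rw [Nat.mod_eq_of_lt hlr]
      exact (hcyc k hk).1 l (Finset.mem_Icc.2 ⟨hl.1, by omega⟩)
  -- invariance of gi
  have hLgi : L gi =ᵐ[m] gi := by
    have hform : gi = fun x => ∑ j ∈ Finset.Icc 1 (r i), (r i : ℝ)⁻¹ * g i j x := by
      funext x; rw [hgi_def]
      exact Finset.mul_sum _ _ _
    rw [hform]
    have e1 : L (fun x => ∑ j ∈ Finset.Icc 1 (r i), (r i : ℝ)⁻¹ * g i j x)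
        =ᵐ[m] fun x => ∑ j ∈ Finset.Icc 1 (r i), L (fun y => (r i : ℝ)⁻¹ * g i j y) x :=
      pf_finsum hL _ _ (fun j hj => (hgint i hi j hj).const_mul _)
    have e2 : (fun x => ∑ j ∈ Finset.Icc 1 (r i), L (fun y => (r i : ℝ)⁻¹ * g i j y) x)
        =ᵐ[m] fun x => ∑ j ∈ Finset.Icc 1 (r i), (r i : ℝ)⁻¹ * L (g i j) x :=
      sum_ae _ _ _ (fun j hj => pf_const_mul hL (hgint i hi j hj) _)
    have e3 : (fun x => ∑ j ∈ Finset.Icc 1 (r i), (r i : ℝ)⁻¹ * L (g i j) x)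
        =ᵐ[m] fun x => ∑ j ∈ Finset.Icc 1 (r i), (r i : ℝ)⁻¹ * g i (j % r i + 1) x :=
      sum_ae _ _ _ (fun j hj => (hshift i hi j hj).mono (fun x hx => by
        simp only []
        rw [hx]))
    have e4 : (fun x => ∑ j ∈ Finset.Icc 1 (r i), (r i : ℝ)⁻¹ * g i (j % r i + 1) x)
        = fun x => ∑ j ∈ Finset.Icc 1 (r i), (r i : ℝ)⁻¹ * g i j x := by
      funext x
      exact cycle_reindex hR (fun l t => (r i : ℝ)⁻¹ * g i t x)
    have := (e1.trans e2).trans e3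
    rwa [e4] at this
  -- real set-integral invariance
  have hinv : ∀ B : Set X, MeasurableSet B →
      ∫ x in T ⁻¹' B, gi x ∂m = ∫ x in B, gi x ∂m := by
    intro B hB
    rw [← (hL gi hgiint).2 B hB]
    exact (integral_congr_ae (ae_restrict_of_ae hLgi))
  have hlint : ∀ B : Set X,
      ∫⁻ x in B, ENNReal.ofReal (gi x) ∂m = ENNReal.ofReal (∫ x in B, gi x ∂m) :=
    fun B => (ofReal_integral_eq_lintegral_ofReal hgiint.restrict
      (ae_restrict_of_ae hginn)).symm
  have hprob : IsProbabilityMeasure (m.withDensity fun x => ENNReal.ofReal (gi x)) := by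
    constructor
    rw [withDensity_apply _ MeasurableSet.univ, hlint Set.univ, setIntegral_univ, hgi1,
      ENNReal.ofReal_one]
  have hmp : MeasurePreserving T (m.withDensity fun x => ENNReal.ofReal (gi x))
      (m.withDensity fun x => ENNReal.ofReal (gi x)) := by
    refine ⟨hT, Measure.ext fun B hB => ?_⟩
    rw [Measure.map_apply hT hB, withDensity_apply _ (hT hB), withDensity_apply _ hB,
      hlint, hlint, hinv B hB]
  -- supports are a.e. nontrivial
  have hSne : ∀ k ∈ Finset.Icc 1 s, ∀ l ∈ Finset.Icc 1 (r k),
      ¬ (g k l =ᵐ[m] (0 : X → ℝ)) := by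
    intro k hk l hl hcon
    have h0 : ∫ x, g k l x ∂m = 0 := by
      rw [integral_congr_ae hcon]; simp
    rw [(hg k hk l hl).2.2.2] at h0
    norm_num at h0
  have hcoef : ∀ k ∈ Finset.Icc 1 s, ∀ l ∈ Finset.Icc 1 (r k), ∀ a b : ℝ,
      (∀ᵐ x ∂m, g k l x ≠ 0 → a * g k l x = b * g k l x) → a = b := by
    intro k hk l hl a b hab
    by_contra hne
    refine hSne k hk l hl ?_
    filter_upwards [hab] with x hx
    show g k l x = 0
    by_contra hgx
    have h1 := hx hgx
    have h2 : (a - b) * g k l x = 0 := by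
      rw [sub_mul, h1, sub_self]
    rcases mul_eq_zero.1 h2 with h | h
    · exact hne (by linarith)
    · exact hgx h
  -- a.e. disjointness of supports
  have hprodz : ∀ k₀ ∈ Finset.Icc 1 s, ∀ l₀ ∈ Finset.Icc 1 (r k₀), ∀ᵐ x ∂m,
      ∀ k ∈ Finset.Icc 1 s, ∀ l ∈ Finset.Icc 1 (r k), (k, l) ≠ (k₀, l₀) →
        g k l x * g k₀ l₀ x = 0 := by
    intro k₀ hk₀ l₀ hl₀
    rw [Filter.eventually_all_finset]
    intro k hk
    rw [Filter.eventually_all_finset]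
    intro l hl
    by_cases hkl : (k, l) = (k₀, l₀)
    · exact Filter.Eventually.of_forall (fun x h => absurd hkl h)
    · filter_upwards [hdis k hk l hl k₀ hk₀ l₀ hl₀ hkl] with x hx _
      simpa using hx
  have hcol : ∀ d : ℕ → ℕ → ℝ, ∀ k₀ ∈ Finset.Icc 1 s, ∀ l₀ ∈ Finset.Icc 1 (r k₀),
      ∀ᵐ x ∂m, g k₀ l₀ x ≠ 0 →
        (∑ k ∈ Finset.Icc 1 s, ∑ l ∈ Finset.Icc 1 (r k), d k l * g k l x)
          = d k₀ l₀ * g k₀ l₀ x := by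
    intro d k₀ hk₀ l₀ hl₀
    filter_upwards [hprodz k₀ hk₀ l₀ hl₀] with x hx hgx
    have hz : ∀ k ∈ Finset.Icc 1 s, ∀ l ∈ Finset.Icc 1 (r k), (k, l) ≠ (k₀, l₀) →
        g k l x = 0 := by
      intro k hk l hl hne
      rcases mul_eq_zero.1 (hx k hk l hl hne) with h | h
      · exact h
      · exact absurd h hgx
    rw [Finset.sum_eq_single_of_mem k₀ hk₀ (fun k hk hkne =>
      Finset.sum_eq_zero (fun l hl => by
        rw [hz k hk l hl (by simp [Prod.ext_iff, hkne]), mul_zero]))]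
    exact Finset.sum_eq_single_of_mem l₀ hl₀ (fun l hl hlne => by
      rw [hz k₀ hk₀ l hl (by simpa [Prod.ext_iff] using hlne), mul_zero])
  have hrepeq : ∀ d e : ℕ → ℕ → ℝ,
      ((fun x => ∑ k ∈ Finset.Icc 1 s, ∑ l ∈ Finset.Icc 1 (r k), d k l * g k l x) =ᵐ[m]
        fun x => ∑ k ∈ Finset.Icc 1 s, ∑ l ∈ Finset.Icc 1 (r k), e k l * g k l x) →
      ∀ k ∈ Finset.Icc 1 s, ∀ l ∈ Finset.Icc 1 (r k), d k l = e k l := by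
    intro d e hde k hk l hl
    refine hcoef k hk l hl _ _ ?_
    filter_upwards [hde, hcol d k hk l hl, hcol e k hk l hl] with x h1 h2 h3 hgx
    rw [← h2 hgx, ← h3 hgx]
    exact h1
  -- the period
  set N : ℕ := ∏ k ∈ Finset.Icc 1 s, r k with hN
  have hdvd : ∀ k ∈ Finset.Icc 1 s, r k ∣ N := fun k hk => Finset.dvd_prod_of_mem _ hk
  have hN1 : 1 ≤ N := Finset.one_le_prod' (fun k hk => hr k hk)
  refine ⟨hprob, hmp, ?_⟩
  -- the ergodicity part
  constructor
  intro A hA hTA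
  rw [Filter.eventuallyConst_set']
  set f : X → ℝ := A.indicator gi with hfdef
  have hfint : Integrable f m := hgiint.indicator hA
  -- L-invariance of f
  have hfL : L f =ᵐ[m] f := by
    refine pf_ae_eq_of_sets (hL f hfint).1 hfint (fun B hB => ?_)
    rw [(hL f hfint).2 B hB, hfdef, setIntegral_indicator hA, setIntegral_indicator hA]
    have hseq : T ⁻¹' B ∩ A = T ⁻¹' (B ∩ A) := by rw [Set.preimage_inter, hTA]
    rw [hseq, ← (hL gi hgiint).2 (B ∩ A) (hB.inter hA)]
    exact integral_congr_ae (ae_restrict_of_ae hLgi)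
  -- the coefficients
  set c : ℕ → ℕ → ℝ := fun k l => Λ k l (hfint.toL1 f) with hcdef
  have hraw : (fun x => f x - ∑ k ∈ Finset.Icc 1 s, ∑ l ∈ Finset.Icc 1 (r k),
      Λ k l (hfint.toL1 f) * g k l x) = fun x => f x - Hfun c r g s 0 x := by
    funext x
    rw [Hfun_zero]
  have ht0 := htend f hfint
  rw [hraw] at ht0
  have hlim : Tendsto (fun n => ∫ x, |f x - Hfun c r g s n x| ∂m) atTop (𝓝 0) := by
    have heq : (fun n => ∫ x, |(L^[n] fun x => f x - Hfun c r g s 0 x) x| ∂m)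
        = fun n => ∫ x, |f x - Hfun c r g s n x| ∂m :=
      funext fun n => integral_congr_ae
        ((key_iter hL hgint hshift hfint hfL c n).mono (fun x hx => by
          simp only []
          rw [hx]))
    rwa [heq] at ht0
  have hfHn : ∀ n₀ : ℕ, (∀ t : ℕ, t ≤ t * N + n₀) → f =ᵐ[m] Hfun c r g s n₀ := by
    intro n₀ hmono
    have h1 : Tendsto (fun t : ℕ => ∫ x, |f x - Hfun c r g s (t * N + n₀) x| ∂m)
        atTop (𝓝 0) :=
      hlim.comp (tendsto_atTop_mono hmono tendsto_id)
    have h2 : (fun t : ℕ => ∫ x, |f x - Hfun c r g s (t * N + n₀) x| ∂m)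
        = fun _ => ∫ x, |f x - Hfun c r g s n₀ x| ∂m := by
      funext t
      rw [Hfun_period hdvd c t n₀]
    rw [h2] at h1
    have h3 : ∫ x, |f x - Hfun c r g s n₀ x| ∂m = 0 :=
      tendsto_nhds_unique tendsto_const_nhds h1
    have h4 : (fun x => |f x - Hfun c r g s n₀ x|) =ᵐ[m] 0 :=
      (integral_eq_zero_iff_of_nonneg (fun x => abs_nonneg _)
        ((hfint.sub (Hfun_int hgint c n₀)).abs)).1 h3
    filter_upwards [h4] with x hx
    have hx0 : |f x - Hfun c r g s n₀ x| = 0 := hx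
    have := abs_eq_zero.1 hx0
    linarith
  have hf0 : f =ᵐ[m] Hfun c r g s 0 := hfHn 0 (fun t => by
    have := Nat.le_mul_of_pos_right t (show 0 < N by omega); omega)
  have hf1 : f =ᵐ[m] Hfun c r g s 1 := hfHn 1 (fun t => by
    have := Nat.le_mul_of_pos_right t (show 0 < N by omega); omega)
  -- standard representations
  have hfrep : f =ᵐ[m] fun x => ∑ k ∈ Finset.Icc 1 s, ∑ l ∈ Finset.Icc 1 (r k),
      c k l * g k l x := by
    have := hf0
    rwa [Hfun_zero] at this
  have hfrep1 : f =ᵐ[m] fun x => ∑ k ∈ Finset.Icc 1 s, ∑ l ∈ Finset.Icc 1 (r k),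
      c k (prvIdx (r k) l) * g k l x := by
    have := hf1
    rwa [Hfun_one c r g s hr] at this
  -- the coefficients are constant along each cycle
  have hprv : ∀ k ∈ Finset.Icc 1 s, ∀ l ∈ Finset.Icc 1 (r k),
      c k l = c k (prvIdx (r k) l) :=
    hrepeq c (fun k l => c k (prvIdx (r k) l)) (hfrep.symm.trans hfrep1)
  have hconst : ∀ l, 1 ≤ l → l ≤ r i → c i l = c i 1 := by
    intro l
    induction l with
    | zero => intro h1 _; omega
    | succ n ih =>
      intro h1 h2
      by_cases hn : n = 0
      · subst hn; rfl
      · have hc1 := hprv i hi (n + 1) (Finset.mem_Icc.2 ⟨by omega, h2⟩)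
        have hp : prvIdx (r i) (n + 1) = n := by
          unfold prvIdx
          split <;> omega
        rw [hc1, hp, ih (by omega) (by omega)]
  -- coefficients vanish off the i-th cycle
  have hzero : ∀ k ∈ Finset.Icc 1 s, k ≠ i → ∀ l ∈ Finset.Icc 1 (r k), c k l = 0 := by
    intro k hk hkne l hl
    refine hcoef k hk l hl _ 0 ?_
    have hallj : ∀ᵐ x ∂m, ∀ j ∈ Finset.Icc 1 (r i), g i j x * g k l x = 0 := by
      rw [Filter.eventually_all_finset]
      intro j hj
      have hne : ((i : ℕ), j) ≠ (k, l) := by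
        simp only [ne_eq, Prod.mk.injEq, not_and]
        intro h; exact absurd h.symm hkne
      filter_upwards [hdis i hi j hj k hk l hl hne] with x hx
      simpa using hx
    filter_upwards [hallj, hfrep, hcol c k hk l hl] with x h1 h2 h3 hgx
    rw [zero_mul, ← h3 hgx, ← h2]
    have hgi0 : gi x = 0 := by
      rw [hgi_def]
      show ((r i : ℝ))⁻¹ * ∑ j ∈ Finset.Icc 1 (r i), g i j x = 0
      have hz : ∀ j ∈ Finset.Icc 1 (r i), g i j x = 0 := by
        intro j hj
        rcases mul_eq_zero.1 (h1 j hj) with h | h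
        · exact h
        · exact absurd h hgx
      rw [Finset.sum_eq_zero hz, mul_zero]
    rw [hfdef]
    by_cases hxA : x ∈ A
    · rw [Set.indicator_of_mem hxA, hgi0]
    · rw [Set.indicator_of_notMem hxA]
  -- the final representation : f = κ • gi
  have hfinal : ∀ᵐ x ∂m, A.indicator gi x = (c i 1 * (r i : ℝ)) * gi x := by
    have hpt : ∀ x, (∑ k ∈ Finset.Icc 1 s, ∑ l ∈ Finset.Icc 1 (r k), c k l * g k l x)
        = (c i 1 * (r i : ℝ)) * gi x := by
      intro x
      rw [Finset.sum_eq_single_of_mem i hi (fun k hk hkne =>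
        Finset.sum_eq_zero (fun l hl => by rw [hzero k hk hkne l hl, zero_mul]))]
      rw [Finset.sum_congr rfl (fun l hl => by
        rw [hconst l (Finset.mem_Icc.1 hl).1 (Finset.mem_Icc.1 hl).2]), ← Finset.mul_sum]
      show c i 1 * ∑ l ∈ Finset.Icc 1 (r i), g i l x
        = c i 1 * (r i : ℝ) * (((r i : ℝ))⁻¹ * ∑ l ∈ Finset.Icc 1 (r i), g i l x)
      rw [mul_assoc, ← mul_assoc ((r i : ℝ)), mul_inv_cancel₀ hRne, one_mul]
    filter_upwards [hfrep] with x hx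
    rw [← hfdef, hx, hpt x]
  set κ : ℝ := c i 1 * (r i : ℝ) with hκdef
  by_cases hκ0 : κ = 0
  · left
    rw [MeasureTheory.ae_eq_empty]
    rw [withDensity_apply _ hA, ← lintegral_indicator hA]
    have hz : ∀ᵐ x ∂m, A.indicator (fun y => ENNReal.ofReal (gi y)) x = 0 := by
      filter_upwards [hfinal] with x hx
      by_cases hxA : x ∈ A
      · rw [Set.indicator_of_mem hxA, hκ0, zero_mul] at hx
        rw [Set.indicator_of_mem hxA, hx, ENNReal.ofReal_zero]
      · rw [Set.indicator_of_notMem hxA]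
    calc ∫⁻ x, A.indicator (fun y => ENNReal.ofReal (gi y)) x ∂m
        = ∫⁻ _, 0 ∂m := lintegral_congr_ae hz
      _ = 0 := lintegral_zero
  · have hκ1 : κ = 1 := by
      by_contra hκ1
      have hgi0 : gi =ᵐ[m] 0 := by
        filter_upwards [hfinal] with x hx
        show gi x = 0
        by_cases hxA : x ∈ A
        · rw [Set.indicator_of_mem hxA] at hx
          have h2 : (1 - κ) * gi x = 0 := by
            rw [sub_mul, one_mul, sub_eq_zero]
            exact hx
          rcases mul_eq_zero.1 h2 with h | h
          · exact absurd (by linarith) hκ1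
          · exact h
        · rw [Set.indicator_of_notMem hxA] at hx
          rcases mul_eq_zero.1 hx.symm with h | h
          · exact absurd h hκ0
          · exact h
      have : (1 : ℝ) = 0 := by
        rw [← hgi1, integral_congr_ae hgi0]
        simp
      norm_num at this
    right
    rw [MeasureTheory.ae_eq_univ]
    rw [withDensity_apply _ hA.compl, ← lintegral_indicator hA.compl]
    have hz : ∀ᵐ x ∂m, Aᶜ.indicator (fun y => ENNReal.ofReal (gi y)) x = 0 := by
      filter_upwards [hfinal] with x hx
      by_cases hxA : x ∈ A
      · rw [Set.indicator_of_notMem (by simpa using hxA : x ∉ Aᶜ)]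
      · rw [Set.indicator_of_notMem hxA, hκ1, one_mul] at hx
        rw [Set.indicator_of_mem (by simpa using hxA : x ∈ Aᶜ), ← hx,
          ENNReal.ofReal_zero]
    calc ∫⁻ x, Aᶜ.indicator (fun y => ENNReal.ofReal (gi y)) x ∂m
        = ∫⁻ _, 0 ∂m := lintegral_congr_ae hz
      _ = 0 := lintegral_zero
end
end

section
/- Let (X, 𝓕, m) be a probability space, T an m-nonsingular transformation whose Perron–Frobenius operator 𝓛_T is asymptotically periodic with data s, r(i), g_{i,j}, λ_{i,j}; set g_i = (1/r(i)) Σ_{j=1}^{r(i)} g_{i,j}, A_i = {g_i > 0}, and B = X \ ⋃_{i=1}^{s} A_i. Then m(T⁻¹(B) \ B) = 0 and lim_{n→∞} m(T⁻ⁿ(B)) = 0. -/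
open MeasureTheory Filter Topology

noncomputable section

/-- **Proposition 2.6(b).** If `𝓛_T` is asymptotically periodic with data
`s, r, g, Λ`, `g_i = (1/r i) ∑_j g_{i,j}`, `A_i = {g_i > 0}` and
`B = X \ ⋃ᵢ A_i`, then `T⁻¹(B) ⊆ B` up to an `m`-null set and
`m(T⁻ⁿ(B)) → 0` as `n → ∞`. -/
theorem stmt_9 {X : Type*} [MeasurableSpace X] (m : Measure X) [IsProbabilityMeasure m]
    (T : X → X) (hT : Measurable T)
    (hns : ∀ A : Set X, MeasurableSet A → m A = 0 → m (T ⁻¹' A) = 0)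
    (L : (X → ℝ) → X → ℝ) (hL : IsPF m T L)
    (s : ℕ) (r : ℕ → ℕ) (g : ℕ → ℕ → X → ℝ) (Λ : ℕ → ℕ → (X →₁[m] ℝ) →L[ℝ] ℝ)
    (hap : AsympPeriodic m L s r g Λ) :
    m ((T ⁻¹' (Set.univ \ ⋃ i ∈ Finset.Icc 1 s, {x | 0 < avgDens (r i) (g i) x})) \
        (Set.univ \ ⋃ i ∈ Finset.Icc 1 s, {x | 0 < avgDens (r i) (g i) x})) = 0 ∧
      Tendsto
        (fun n =>
          m (T^[n] ⁻¹'
            (Set.univ \ ⋃ i ∈ Finset.Icc 1 s, {x | 0 < avgDens (r i) (g i) x})))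
        atTop (𝓝 0) := by
  obtain ⟨hs, hr, hg, -, hcyc, hlim⟩ := hap
  set B : Set X :=
    Set.univ \ ⋃ i ∈ Finset.Icc 1 s, {x | 0 < avgDens (r i) (g i) x} with hBdef
  have hgi : ∀ i ∈ Finset.Icc 1 s, ∀ j ∈ Finset.Icc 1 (r i), Integrable (g i j) m :=
    fun i hi j hj => (hg i hi j hj).2.1
  -- uniqueness of integrable functions with equal set integrals
  have uniq : ∀ u v : X → ℝ, Integrable u m → Integrable v m →
      (∀ A : Set X, MeasurableSet A → ∫ x in A, u x ∂m = ∫ x in A, v x ∂m) →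
      u =ᵐ[m] v := by
    intro u v hu hv hA
    exact ae_eq_of_forall_setIntegral_eq_of_sigmaFinite
      (fun A hAm _ => hu.integrableOn) (fun A hAm _ => hv.integrableOn)
      (fun A hAm _ => hA A hAm)
  -- iterated Perron-Frobenius property
  have PFn : ∀ n (f : X → ℝ), Integrable f m → Integrable (L^[n] f) m ∧
      ∀ A : Set X, MeasurableSet A →
        ∫ x in A, (L^[n] f) x ∂m = ∫ x in T^[n] ⁻¹' A, f x ∂m := by
    intro n
    induction n with
    | zero =>
      intro f hf
      refine ⟨hf, fun A hA => ?_⟩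
      simp
    | succ n ih =>
      intro f hf
      have h1 := hL f hf
      have h2 := ih (L f) h1.1
      constructor
      · rw [Function.iterate_succ_apply]
        exact h2.1
      · intro A hA
        rw [Function.iterate_succ_apply, h2.2 A hA,
          h1.2 _ ((hT.iterate n) hA)]
        congr 1
  -- L respects a.e. equality
  have Lcongr : ∀ u v : X → ℝ, Integrable u m → Integrable v m → u =ᵐ[m] v →
      L u =ᵐ[m] L v := by
    intro u v hu hv huv
    refine uniq _ _ (hL u hu).1 (hL v hv).1 (fun A hA => ?_)
    rw [(hL u hu).2 A hA, (hL v hv).2 A hA]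
    exact integral_congr_ae (ae_restrict_of_ae huv)
  -- one step of the cycle
  have step : ∀ i ∈ Finset.Icc 1 s, ∀ j ∈ Finset.Icc 1 (r i),
      ∃ j' ∈ Finset.Icc 1 (r i), L (g i j) =ᵐ[m] g i j' := by
    intro i hi j hj
    rcases eq_or_ne j (r i) with h | h
    · exact ⟨1, Finset.mem_Icc.mpr ⟨le_refl 1, hr i hi⟩, h ▸ (hcyc i hi).2⟩
    · have hj' := Finset.mem_Icc.mp hj
      have hmem : j ∈ Finset.Icc 1 (r i - 1) := Finset.mem_Icc.mpr ⟨hj'.1, by omega⟩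
      exact ⟨j + 1, Finset.mem_Icc.mpr ⟨by omega, by omega⟩, (hcyc i hi).1 j hmem⟩
  -- n steps of the cycle
  have cycN : ∀ n, ∀ i ∈ Finset.Icc 1 s, ∀ j ∈ Finset.Icc 1 (r i),
      ∃ j' ∈ Finset.Icc 1 (r i), L^[n] (g i j) =ᵐ[m] g i j' := by
    intro n
    induction n with
    | zero => intro i hi j hj; exact ⟨j, hj, by simp⟩
    | succ n ih =>
      intro i hi j hj
      obtain ⟨j', hj', hje⟩ := ih i hi j hj
      obtain ⟨j'', hj'', hje'⟩ := step i hi j' hj'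
      refine ⟨j'', hj'', ?_⟩
      rw [Function.iterate_succ_apply']
      exact (Lcongr _ _ (PFn n _ (hgi i hi j hj)).1 (hgi i hi j' hj') hje).trans hje'
  -- a.e. nonnegativity of all densities
  have h_nn : ∀ᵐ x ∂m, ∀ i, ∀ j, i ∈ Finset.Icc 1 s → j ∈ Finset.Icc 1 (r i) →
      0 ≤ g i j x := by
    rw [ae_all_iff]
    intro i
    rw [ae_all_iff]
    intro j
    by_cases hij : i ∈ Finset.Icc 1 s ∧ j ∈ Finset.Icc 1 (r i)
    · filter_upwards [(hg i hij.1 j hij.2).2.2.1] with x hx using fun _ _ => hx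
    · filter_upwards with x h1 h2
      exact absurd ⟨h1, h2⟩ hij
  -- B is measurable
  have hBmeas : MeasurableSet B := by
    apply MeasurableSet.univ.diff
    refine Finset.measurableSet_biUnion _ (fun i hi => ?_)
    refine measurableSet_lt measurable_const ?_
    exact (Finset.measurable_sum _ (fun j hj => (hg i hi j hj).1)).const_mul _
  -- a.e. on B all densities vanish
  have key_B : ∀ᵐ x ∂m, x ∈ B → ∀ i ∈ Finset.Icc 1 s, ∀ j ∈ Finset.Icc 1 (r i),
      g i j x = 0 := by
    filter_upwards [h_nn] with x hx hxB i hi j hj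
    have hxi : ¬ (0 < avgDens (r i) (g i) x) := by
      intro hpos
      exact hxB.2 (Set.mem_iUnion.mpr ⟨i, Set.mem_iUnion.mpr ⟨hi, hpos⟩⟩)
    have hrpos : (0:ℝ) < ((r i : ℝ))⁻¹ := by
      have h1 : 1 ≤ r i := hr i hi
      have : (0:ℝ) < (r i : ℝ) := by exact_mod_cast Nat.lt_of_lt_of_le Nat.zero_lt_one h1
      exact inv_pos.mpr this
    have hsum : ∑ j ∈ Finset.Icc 1 (r i), g i j x ≤ 0 := by
      by_contra hc
      push_neg at hc
      exact hxi (mul_pos hrpos hc)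
    have hsum0 : ∑ j ∈ Finset.Icc 1 (r i), g i j x = 0 :=
      le_antisymm hsum (Finset.sum_nonneg fun j hj => hx i j hi hj)
    exact (Finset.sum_eq_zero_iff_of_nonneg (fun j hj => hx i j hi hj)).mp hsum0 j hj
  -- set integrals over B of the densities vanish
  have vanish : ∀ i ∈ Finset.Icc 1 s, ∀ j ∈ Finset.Icc 1 (r i),
      ∫ x in B, g i j x ∂m = 0 := by
    intro i hi j hj
    have hae : ∀ᵐ x ∂m.restrict B, g i j x = (0:ℝ) := by
      rw [ae_restrict_iff' hBmeas]
      filter_upwards [key_B] with x hx hxB using hx hxB i hi j hj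
    calc ∫ x in B, g i j x ∂m = ∫ _ in B, (0:ℝ) ∂m := integral_congr_ae hae
      _ = 0 := integral_zero _ _
  ----------------------------------------------------------------
  -- Claim 1 : m (T⁻¹ B \ B) = 0
  ----------------------------------------------------------------
  have hhint : Integrable
      (fun x => ∑ i ∈ Finset.Icc 1 s, ∑ j ∈ Finset.Icc 1 (r i), g i j x) m :=
    integrable_finset_sum _ (fun i hi =>
      integrable_finset_sum _ (fun j hj => hgi i hi j hj))
  have hLsum : L (fun x => ∑ i ∈ Finset.Icc 1 s, ∑ j ∈ Finset.Icc 1 (r i), g i j x)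
      =ᵐ[m] fun x => ∑ i ∈ Finset.Icc 1 s, ∑ j ∈ Finset.Icc 1 (r i), L (g i j) x := by
    refine uniq _ _ (hL _ hhint).1
      (integrable_finset_sum _ fun i hi =>
        integrable_finset_sum _ fun j hj => (hL _ (hgi i hi j hj)).1)
      (fun A hA => ?_)
    rw [(hL _ hhint).2 A hA]
    rw [integral_finset_sum _ (fun i hi =>
      (integrable_finset_sum _ fun j hj => hgi i hi j hj).restrict)]
    rw [integral_finset_sum _ (fun i hi =>
      (integrable_finset_sum _ fun j hj => (hL _ (hgi i hi j hj)).1).restrict)]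
    refine Finset.sum_congr rfl fun i hi => ?_
    rw [integral_finset_sum _ (fun j hj => (hgi i hi j hj).restrict),
      integral_finset_sum _ (fun j hj => ((hL _ (hgi i hi j hj)).1).restrict)]
    exact Finset.sum_congr rfl fun j hj => ((hL _ (hgi i hi j hj)).2 A hA).symm
  have int_T1B :
      ∫ x in T ⁻¹' B, (∑ i ∈ Finset.Icc 1 s, ∑ j ∈ Finset.Icc 1 (r i), g i j x) ∂m
        = 0 := by
    rw [← (hL _ hhint).2 B hBmeas]
    rw [integral_congr_ae (ae_restrict_of_ae hLsum)]
    rw [integral_finset_sum _ (fun i hi =>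
      (integrable_finset_sum _ fun j hj => (hL _ (hgi i hi j hj)).1).restrict)]
    refine Finset.sum_eq_zero fun i hi => ?_
    rw [integral_finset_sum _ (fun j hj => ((hL _ (hgi i hi j hj)).1).restrict)]
    refine Finset.sum_eq_zero fun j hj => ?_
    obtain ⟨j', hj', he⟩ := step i hi j hj
    rw [integral_congr_ae (ae_restrict_of_ae he)]
    exact vanish i hi j' hj'
  have hT1B : MeasurableSet (T ⁻¹' B) := hT hBmeas
  have hzero : ∀ᵐ x ∂m, x ∈ T ⁻¹' B →
      (∑ i ∈ Finset.Icc 1 s, ∑ j ∈ Finset.Icc 1 (r i), g i j x) = 0 := by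
    rw [← ae_restrict_iff' hT1B]
    have := (setIntegral_eq_zero_iff_of_nonneg_ae
      (by
        filter_upwards [ae_restrict_of_ae h_nn] with x hx
        exact Finset.sum_nonneg fun i hi => Finset.sum_nonneg fun j hj => hx i j hi hj)
      hhint.restrict).mp int_T1B
    filter_upwards [this] with x hx using hx
  have claim1 : m ((T ⁻¹' B) \ B) = 0 := by
    rw [measure_eq_zero_iff_ae_notMem]
    filter_upwards [hzero, h_nn] with x hx hnn hmem
    obtain ⟨hx1, hx2⟩ := hmem
    have hU : x ∈ ⋃ i ∈ Finset.Icc 1 s, {y | 0 < avgDens (r i) (g i) y} := by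
      by_contra hc
      exact hx2 ⟨trivial, hc⟩
    simp only [Set.mem_iUnion] at hU
    obtain ⟨i, hi, hpos⟩ := hU
    have hrpos : (0:ℝ) < ((r i : ℝ))⁻¹ := by
      have h1 : 1 ≤ r i := hr i hi
      have : (0:ℝ) < (r i : ℝ) := by exact_mod_cast Nat.lt_of_lt_of_le Nat.zero_lt_one h1
      exact inv_pos.mpr this
    have hsumpos : 0 < ∑ j ∈ Finset.Icc 1 (r i), g i j x := by
      by_contra hc
      push_neg at hc
      have : avgDens (r i) (g i) x ≤ 0 := by
        have := mul_nonpos_of_nonneg_of_nonpos (le_of_lt hrpos) hc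
        simpa [avgDens] using this
      exact absurd hpos (not_lt.mpr this)
    have hle : ∑ j ∈ Finset.Icc 1 (r i), g i j x
        ≤ ∑ i ∈ Finset.Icc 1 s, ∑ j ∈ Finset.Icc 1 (r i), g i j x :=
      Finset.single_le_sum
        (f := fun i' => ∑ j ∈ Finset.Icc 1 (r i'), g i' j x)
        (fun i' hi' => Finset.sum_nonneg fun j hj => hnn i' j hi' hj) hi
    have := hx hx1
    linarith
  ----------------------------------------------------------------
  -- Claim 2 : m (T⁻ⁿ B) → 0
  ----------------------------------------------------------------
  have h1int : Integrable (fun _ : X => (1:ℝ)) m := integrable_const 1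
  have hlim1 := hlim (fun _ => (1:ℝ)) h1int
  set c : ℕ → ℕ → ℝ := fun i j => Λ i j (h1int.toL1 (fun _ => (1:ℝ))) with hc
  set q : X → ℝ :=
    fun x => ∑ i ∈ Finset.Icc 1 s, ∑ j ∈ Finset.Icc 1 (r i), c i j * g i j x with hq
  have hqint : Integrable q m :=
    integrable_finset_sum _ fun i hi =>
      integrable_finset_sum _ fun j hj => (hgi i hi j hj).const_mul _
  have hFint : Integrable (fun x => 1 - q x) m := h1int.sub hqint
  -- L^[n] q vanishes on B
  have LnQ : ∀ n, ∫ x in B, (L^[n] q) x ∂m = 0 := by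
    intro n
    have hLnq : L^[n] q =ᵐ[m]
        fun x => ∑ i ∈ Finset.Icc 1 s, ∑ j ∈ Finset.Icc 1 (r i),
          c i j * (L^[n] (g i j)) x := by
      refine uniq _ _ (PFn n _ hqint).1
        (integrable_finset_sum _ fun i hi =>
          integrable_finset_sum _ fun j hj => ((PFn n _ (hgi i hi j hj)).1).const_mul _)
        (fun A hA => ?_)
      rw [(PFn n _ hqint).2 A hA]
      rw [integral_finset_sum _ (fun i hi =>
        (integrable_finset_sum _ fun j hj => ((hgi i hi j hj).const_mul _)).restrict)]
      rw [integral_finset_sum _ (fun i hi =>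
        (integrable_finset_sum _ fun j hj =>
          (((PFn n _ (hgi i hi j hj)).1).const_mul _)).restrict)]
      refine Finset.sum_congr rfl fun i hi => ?_
      rw [integral_finset_sum _ (fun j hj => ((hgi i hi j hj).const_mul _).restrict),
        integral_finset_sum _ (fun j hj =>
          (((PFn n _ (hgi i hi j hj)).1).const_mul _).restrict)]
      refine Finset.sum_congr rfl fun j hj => ?_
      rw [integral_const_mul, integral_const_mul, (PFn n _ (hgi i hi j hj)).2 A hA]
    rw [integral_congr_ae (ae_restrict_of_ae hLnq)]
    rw [integral_finset_sum _ (fun i hi =>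
      (integrable_finset_sum _ fun j hj =>
        (((PFn n _ (hgi i hi j hj)).1).const_mul _)).restrict)]
    refine Finset.sum_eq_zero fun i hi => ?_
    rw [integral_finset_sum _ (fun j hj =>
      (((PFn n _ (hgi i hi j hj)).1).const_mul _).restrict)]
    refine Finset.sum_eq_zero fun j hj => ?_
    obtain ⟨j', hj', he⟩ := cycN n i hi j hj
    rw [integral_const_mul, integral_congr_ae (ae_restrict_of_ae he),
      vanish i hi j' hj', mul_zero]
  -- decomposition of L^[n] 1
  have LnOne : ∀ n, L^[n] (fun _ : X => (1:ℝ)) =ᵐ[m]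
      fun x => (L^[n] (fun x => 1 - q x)) x + (L^[n] q) x := by
    intro n
    refine uniq _ _ (PFn n _ h1int).1
      ((PFn n _ hFint).1.add (PFn n _ hqint).1) (fun A hA => ?_)
    rw [(PFn n _ h1int).2 A hA]
    rw [integral_add ((PFn n _ hFint).1.restrict) ((PFn n _ hqint).1.restrict)]
    rw [(PFn n _ hFint).2 A hA, (PFn n _ hqint).2 A hA]
    rw [← integral_add (hFint.restrict) (hqint.restrict)]
    exact integral_congr_ae (Eventually.of_forall fun x => by ring)
  -- the key bound
  have key : ∀ n, (m (T^[n] ⁻¹' B)).toReal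
      ≤ ∫ x, |(L^[n] (fun x => 1 - q x)) x| ∂m := by
    intro n
    have e1 : (m (T^[n] ⁻¹' B)).toReal = ∫ _ in T^[n] ⁻¹' B, (1:ℝ) ∂m := by
      rw [setIntegral_const]; simp; rfl
    have e2 : ∫ _ in T^[n] ⁻¹' B, (1:ℝ) ∂m
        = ∫ x in B, (L^[n] (fun _ : X => (1:ℝ))) x ∂m :=
      ((PFn n _ h1int).2 B hBmeas).symm
    have e3 : ∫ x in B, (L^[n] (fun _ : X => (1:ℝ))) x ∂m
        = ∫ x in B, (L^[n] (fun x => 1 - q x)) x ∂m + ∫ x in B, (L^[n] q) x ∂m := by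
      rw [integral_congr_ae (ae_restrict_of_ae (LnOne n))]
      exact integral_add ((PFn n _ hFint).1.restrict) ((PFn n _ hqint).1.restrict)
    rw [e1, e2, e3, LnQ n, add_zero]
    calc ∫ x in B, (L^[n] (fun x => 1 - q x)) x ∂m
        ≤ ∫ x in B, |(L^[n] (fun x => 1 - q x)) x| ∂m :=
          integral_mono_ae ((PFn n _ hFint).1.restrict)
            ((PFn n _ hFint).1.abs.restrict)
            (Eventually.of_forall fun x => le_abs_self _)
      _ ≤ ∫ x, |(L^[n] (fun x => 1 - q x)) x| ∂m :=
          setIntegral_le_integral ((PFn n _ hFint).1.abs)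
            (Eventually.of_forall fun x => abs_nonneg _)
  refine ⟨claim1, ?_⟩
  have h0 : Tendsto (fun n => ∫ x, |(L^[n] (fun x => 1 - q x)) x| ∂m) atTop (𝓝 0) :=
    hlim1
  have hb : ∀ n, m (T^[n] ⁻¹' B)
      ≤ ENNReal.ofReal (∫ x, |(L^[n] (fun x => 1 - q x)) x| ∂m) := by
    intro n
    rw [← ENNReal.ofReal_toReal (measure_ne_top m _)]
    exact ENNReal.ofReal_le_ofReal (key n)
  have hof : Tendsto
      (fun n => ENNReal.ofReal (∫ x, |(L^[n] (fun x => 1 - q x)) x| ∂m))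
      atTop (𝓝 0) := by
    rw [← ENNReal.ofReal_zero]
    exact ENNReal.tendsto_ofReal h0
  exact tendsto_of_tendsto_of_tendsto_of_le_of_le tendsto_const_nhds hof
    (fun n => zero_le) hb
end
end

section
/- Let (X, 𝓕, m) be a probability space and T an m-nonsingular transformation with Perron–Frobenius operator 𝓛_T. Let f, g ∈ L¹(m) be nonnegative and suppose ‖(𝓛_T)ⁿ f − g‖_{L¹(m)} → 0 as n → ∞. Then m({f > 0} \ ⋃_{n=0}^{∞} T⁻ⁿ{g > 0}) = 0. -/
open MeasureTheory Filter Topology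

noncomputable section

/-- **Proposition 2.5.** If `‖𝓛_Tⁿ f − g‖₁ → 0` for nonnegative `f, g ∈ L¹(m)`,
then `m({f > 0} \ ⋃ₙ T⁻ⁿ{g > 0}) = 0`. -/
theorem stmt_10 {X : Type*} [MeasurableSpace X] (m : Measure X) [IsProbabilityMeasure m]
    (T : X → X) (hT : Measurable T)
    (hns : ∀ A : Set X, MeasurableSet A → m A = 0 → m (T ⁻¹' A) = 0)
    (L : (X → ℝ) → X → ℝ) (hL : IsPF m T L)
    (f g : X → ℝ) (hfm : Measurable f) (hgm : Measurable g)
    (hfi : Integrable f m) (hgi : Integrable g m)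
    (hf0 : 0 ≤ f) (hg0 : 0 ≤ g)
    (hconv : Tendsto (fun n => ∫ x, |(L^[n] f) x - g x| ∂m) atTop (𝓝 0)) :
    m ({x | 0 < f x} \ ⋃ n : ℕ, T^[n] ⁻¹' {x | 0 < g x}) = 0 := by
  set B : Set X := ⋃ n : ℕ, T^[n] ⁻¹' {x | 0 < g x} with hB
  set C : Set X := Bᶜ with hCdef
  have hgset : MeasurableSet {x | 0 < g x} := measurableSet_lt measurable_const hgm
  have hC : MeasurableSet C :=
    (MeasurableSet.iUnion fun n => (hT.iterate n) hgset).compl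
  have hCsub : C ⊆ T ⁻¹' C := by
    intro x hx
    simp only [hCdef, hB, Set.mem_compl_iff, Set.mem_iUnion, not_exists] at hx
    simp only [Set.mem_preimage, hCdef, hB, Set.mem_compl_iff, Set.mem_iUnion, not_exists]
    intro n
    have := hx (n + 1)
    rwa [Set.mem_preimage, Function.iterate_succ_apply] at this
  -- g = 0 on C
  have hgC : ∀ x ∈ C, g x = 0 := by
    intro x hx
    simp only [hCdef, hB, Set.mem_compl_iff, Set.mem_iUnion, not_exists] at hx
    have := hx 0
    simp only [Function.iterate_zero, Set.mem_preimage, id_eq, Set.mem_setOf_eq, not_lt] at this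
    exact le_antisymm this (hg0 x)
  have hintgC : ∫ x in C, g x ∂m = 0 :=
    setIntegral_eq_zero_of_forall_eq_zero hgC
  -- induction
  have key : ∀ n : ℕ, Integrable (L^[n] f) m ∧ 0 ≤ᵐ[m] (L^[n] f) ∧
      ∫ x in C, f x ∂m ≤ ∫ x in C, (L^[n] f) x ∂m := by
    intro n
    induction n with
    | zero => exact ⟨hfi, Filter.Eventually.of_forall hf0, le_refl _⟩
    | succ n ih =>
      obtain ⟨hi, hpos, hle⟩ := ih
      have hLn := hL (L^[n] f) hi
      rw [Function.iterate_succ_apply']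
      refine ⟨hLn.1, ?_, ?_⟩
      · refine ae_nonneg_of_forall_setIntegral_nonneg hLn.1 fun s hs _ => ?_
        rw [hLn.2 s hs]
        exact setIntegral_nonneg_of_ae hpos
      · calc ∫ x in C, f x ∂m ≤ ∫ x in C, (L^[n] f) x ∂m := hle
          _ ≤ ∫ x in T ⁻¹' C, (L^[n] f) x ∂m :=
            setIntegral_mono_set hi.integrableOn (ae_restrict_of_ae hpos)
              (HasSubset.Subset.eventuallyLE hCsub)
          _ = ∫ x in C, L (L^[n] f) x ∂m := (hLn.2 C hC).symm
  -- lower bound for the L¹ distance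
  have hlow : ∀ n : ℕ, ∫ x in C, f x ∂m ≤ ∫ x, |(L^[n] f) x - g x| ∂m := by
    intro n
    obtain ⟨hi, hpos, hle⟩ := key n
    have hsub : Integrable (fun x => (L^[n] f) x - g x) m := hi.sub hgi
    calc ∫ x in C, f x ∂m ≤ ∫ x in C, (L^[n] f) x ∂m := hle
      _ = ∫ x in C, ((L^[n] f) x - g x) ∂m := by
          rw [integral_sub hi.integrableOn hgi.integrableOn, hintgC, sub_zero]
      _ ≤ ∫ x in C, |(L^[n] f) x - g x| ∂m :=
          setIntegral_mono hsub.integrableOn hsub.abs.integrableOn fun x => le_abs_self _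
      _ ≤ ∫ x, |(L^[n] f) x - g x| ∂m :=
          setIntegral_le_integral hsub.abs
            (Filter.Eventually.of_forall fun x => abs_nonneg _)
  have hCf : ∫ x in C, f x ∂m ≤ 0 := ge_of_tendsto' hconv hlow
  have hCf0 : ∫ x in C, f x ∂m = 0 :=
    le_antisymm hCf (setIntegral_nonneg_of_ae (Filter.Eventually.of_forall fun x => hf0 x))
  have hfC : f =ᵐ[m.restrict C] 0 := by
    have := (integral_eq_zero_iff_of_nonneg hf0 hfi.restrict).mp hCf0
    exact this
  -- conclude
  have : m.restrict C {x | 0 < f x} = 0 := by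
    refine measure_mono_null (fun x hx => ?_) hfC
    simp only [Set.mem_setOf_eq] at hx
    intro h
    simp only [Set.mem_setOf_eq, Pi.zero_apply] at h
    exact absurd h (ne_of_gt hx)
  rw [Set.diff_eq, ← Measure.restrict_apply' hC]
  exact this
end
end

section
/- Let (X, 𝓕, m) be a probability space and T an m-nonsingular transformation with Perron–Frobenius operator 𝓛_T. Let f ∈ L¹(m) be nonnegative with 𝓛_T f = f, and let A ∈ 𝓕 satisfy A ⊆ T⁻¹(A). Then 𝓛_T(f·1_A) = f·1_A in L¹(m). -/
open MeasureTheory Filter Topology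

noncomputable section

/-- **Proposition 2.4.** If `𝓛_T f = f` for a nonnegative `f ∈ L¹(m)` and
`A ⊆ T⁻¹(A)`, then `𝓛_T (f·1_A) = f·1_A`. -/
theorem stmt_12 {X : Type*} [MeasurableSpace X] (m : Measure X) [IsProbabilityMeasure m]
    (T : X → X) (hT : Measurable T)
    (hns : ∀ A : Set X, MeasurableSet A → m A = 0 → m (T ⁻¹' A) = 0)
    (L : (X → ℝ) → X → ℝ) (hL : IsPF m T L)
    (f : X → ℝ) (hfm : Measurable f) (hfi : Integrable f m) (hf0 : 0 ≤ f)
    (hfix : L f =ᵐ[m] f)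
    (A : Set X) (hA : MeasurableSet A) (hAsub : A ⊆ T ⁻¹' A) :
    L (A.indicator f) =ᵐ[m] A.indicator f := by

  classical
  set g : X → ℝ := A.indicator f with hg
  set g' : X → ℝ := Aᶜ.indicator f with hg'
  have hgi : Integrable g m := hfi.indicator hA
  have hg'i : Integrable g' m := hfi.indicator hA.compl
  have hgadd : ∀ x, g x + g' x = f x := by
    intro x
    by_cases hx : x ∈ A <;>
      simp [hg, hg', Set.indicator_of_mem, Set.indicator_of_notMem, hx]
  obtain ⟨hLgi, hLgint⟩ := hL g hgi
  obtain ⟨hLg'i, hLg'int⟩ := hL g' hg'i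
  obtain ⟨hLfi, hLfint⟩ := hL f hfi
  -- L g + L g' = f a.e.
  have hsum : (fun x => L g x + L g' x) =ᵐ[m] f := by
    apply Integrable.ae_eq_of_forall_setIntegral_eq _ _ (hLgi.add hLg'i) hfi
    intro s hs _
    simp only [Pi.add_apply]
    rw [integral_add hLgi.integrableOn hLg'i.integrableOn, hLgint s hs, hLg'int s hs,
      ← integral_add hgi.integrableOn hg'i.integrableOn]
    have h1 : ∫ x in T ⁻¹' s, (g x + g' x) ∂m = ∫ x in T ⁻¹' s, f x ∂m := by
      apply integral_congr_ae; filter_upwards with x; exact hgadd x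
    rw [h1, ← hLfint s hs]
    exact integral_congr_ae (ae_restrict_of_ae hfix)
  -- positivity
  have hpos : ∀ (h : X → ℝ), Integrable h m → 0 ≤ h →
      (∀ s : Set X, MeasurableSet s → ∫ x in s, L h x ∂m = ∫ x in T ⁻¹' s, h x ∂m) →
      Integrable (L h) m → 0 ≤ᵐ[m] L h := by
    intro h hhi hh0 hint hLhi
    apply ae_nonneg_of_forall_setIntegral_nonneg hLhi
    intro s hs _
    rw [hint s hs]
    exact setIntegral_nonneg (hT hs) fun x _ => hh0 x
  have hg0 : 0 ≤ g := fun x => Set.indicator_nonneg (fun y _ => hf0 y) x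
  have hg'0 : 0 ≤ g' := fun x => Set.indicator_nonneg (fun y _ => hf0 y) x
  have hLgpos : 0 ≤ᵐ[m] L g := hpos g hgi hg0 hLgint hLgi
  have hLg'pos : 0 ≤ᵐ[m] L g' := hpos g' hg'i hg'0 hLg'int hLg'i
  -- ∫_{Aᶜ} L g = 0, hence L g = 0 a.e. on Aᶜ
  have hLgAc : ∫ x in Aᶜ, L g x ∂m = 0 := by
    rw [hLgint Aᶜ hA.compl]
    apply setIntegral_eq_zero_of_forall_eq_zero
    intro x hx
    have hxA : x ∉ A := fun hxa => hx (hAsub hxa)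
    simp [hg, Set.indicator_of_notMem hxA]
  have hLgAc0 : L g =ᵐ[m.restrict Aᶜ] 0 :=
    (setIntegral_eq_zero_iff_of_nonneg_ae (ae_restrict_of_ae hLgpos)
      hLgi.integrableOn).mp hLgAc
  -- ∫_{A} L g' = 0
  have htot : ∫ x, L g' x ∂m = ∫ x, g' x ∂m := by
    have := hLg'int Set.univ MeasurableSet.univ
    simpa using this
  have hAcint : ∫ x in Aᶜ, L g' x ∂m = ∫ x in Aᶜ, g' x ∂m := by
    have h1 : L g' =ᵐ[m.restrict Aᶜ] f := by
      have hsr : ∀ᵐ x ∂(m.restrict Aᶜ), L g x + L g' x = f x := ae_restrict_of_ae hsum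
      filter_upwards [hsr, hLgAc0] with x hx hx0
      have : L g x + L g' x = f x := hx
      simp only [Pi.zero_apply] at hx0
      linarith
    have h2 : g' =ᵐ[m.restrict Aᶜ] f := by
      rw [Filter.EventuallyEq]
      rw [ae_restrict_iff' hA.compl]
      filter_upwards with x hx
      simp [hg', Set.indicator_of_mem hx]
    calc ∫ x in Aᶜ, L g' x ∂m = ∫ x in Aᶜ, f x ∂m := integral_congr_ae h1
      _ = ∫ x in Aᶜ, g' x ∂m := (integral_congr_ae h2).symm
  have hsplit : ∫ x, L g' x ∂m = ∫ x in A, L g' x ∂m + ∫ x in Aᶜ, L g' x ∂m := by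
    rw [← integral_add_compl hA hLg'i]
  have hsplit' : ∫ x, g' x ∂m = ∫ x in A, g' x ∂m + ∫ x in Aᶜ, g' x ∂m := by
    rw [← integral_add_compl hA hg'i]
  have hgA' : ∫ x in A, g' x ∂m = 0 := by
    apply setIntegral_eq_zero_of_forall_eq_zero
    intro x hx
    simp [hg', Set.indicator_of_notMem (by simpa using hx : x ∉ Aᶜ)]
  have hLg'A : ∫ x in A, L g' x ∂m = 0 := by
    have := htot
    rw [hsplit, hsplit', hAcint, hgA'] at this
    linarith
  have hLg'A0 : L g' =ᵐ[m.restrict A] 0 :=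
    (setIntegral_eq_zero_iff_of_nonneg_ae (ae_restrict_of_ae hLg'pos)
      hLg'i.integrableOn).mp hLg'A
  -- combine
  have h1 : ∀ᵐ x ∂m, x ∈ Aᶜ → L g x = 0 := by
    have := hLgAc0
    rw [Filter.EventuallyEq, ae_restrict_iff' hA.compl] at this
    exact this
  have h2 : ∀ᵐ x ∂m, x ∈ A → L g' x = 0 := by
    have := hLg'A0
    rw [Filter.EventuallyEq, ae_restrict_iff' hA] at this
    exact this
  filter_upwards [hsum, h1, h2] with x hx hx1 hx2
  by_cases hxA : x ∈ A
  · have h0 := hx2 hxA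
    have hxi : g x = f x := Set.indicator_of_mem hxA f
    linarith
  · have h0 := hx1 (by simpa using hxA)
    have hxi : g x = 0 := Set.indicator_of_notMem hxA f
    linarith
end
end
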